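/- arXiv:2309.12694 — 4 statements merged into one kernel-verified Lean document; each statement's English description precedes it below -/
import Mathlib

section
/- For a connected temporal graph whose underlying static graph at each time is vertex-transitive (such as a circular skip link graph) with all node and edge features zero, the Temporal 1-WL test assigns the same color to all nodes at every refinement iteration and every time step; consequently, Temporal 1-WL cannot distinguish two such temporal graphs on the same number of nodes with the same multiset of event timestamps per node. -/
/-- A temporal graph on node type `V`: a finite set of timed edge events. -/
structure TemporalGraph (V : Type) where
  events : Finset (V × V × ℕ)

/-- The multiset of (neighbor, event time) pairs of `u` over events up to time `t`. -/
def nbrs {V : Type} [DecidableEq V] (G : TemporalGraph V) (t : ℕ) (u : V) :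
    Multiset (V × ℕ) :=
  (G.events.filter (fun e => e.1 = u ∧ e.2.2 ≤ t)).val.map (fun e => (e.2.1, e.2.2))

/-- Canonical color type for the Temporal 1-WL test (an injective hash is modeled by
the canonical nested-multiset color). -/
def ColorT : ℕ → Type
  | 0 => Unit
  | k + 1 => ColorT k × Multiset (ColorT k × ℕ)

/-- Temporal 1-WL color refinement at time `t`: the color of `u` at iteration `k+1` is
the (injective) pairing of its previous color with the multiset of
(neighbor color, event time) pairs over all edge events up to time `t`. -/
def wlColor {V : Type} [DecidableEq V] (G : TemporalGraph V) (t : ℕ) :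
    (k : ℕ) → V → ColorT k
  | 0, _ => ()
  | k + 1, u =>
      (wlColor G t k u, (nbrs G t u).map (fun p => (wlColor G t k p.1, p.2)))

/-- A temporal automorphism of a temporal graph. -/
def IsTempAutomorphism {V : Type} (G : TemporalGraph V) (σ : Equiv.Perm V) : Prop :=
  ∀ (u v : V) (s : ℕ), (u, v, s) ∈ G.events ↔ (σ u, σ v, s) ∈ G.events

/-- A temporal graph is vertex-transitive if its temporal automorphism group acts
transitively on the nodes. -/
def VertexTransitive {V : Type} (G : TemporalGraph V) : Prop :=
  ∀ u v : V, ∃ σ : Equiv.Perm V, IsTempAutomorphism G σ ∧ σ u = v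

lemma nbrs_perm {V : Type} [DecidableEq V] (G : TemporalGraph V) (t : ℕ)
    (σ : Equiv.Perm V) (hσ : IsTempAutomorphism G σ) (u : V) :
    nbrs G t (σ u) = (nbrs G t u).map (fun p => (σ p.1, p.2)) := by
  have himg : G.events.filter (fun e => e.1 = σ u ∧ e.2.2 ≤ t)
      = (G.events.filter (fun e => e.1 = u ∧ e.2.2 ≤ t)).image
          (fun e => (σ e.1, σ e.2.1, e.2.2)) := by
    ext ⟨a, b, s⟩
    simp only [Finset.mem_filter, Finset.mem_image, Prod.mk.injEq]
    constructor
    · rintro ⟨hmem, ha, hs⟩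
      refine ⟨(σ.symm a, σ.symm b, s), ⟨?_, ?_, hs⟩, by simp, by simp, rfl⟩
      · rw [hσ]; simpa using hmem
      · simp [ha, Equiv.symm_apply_eq]
    · rintro ⟨⟨x, y, s'⟩, ⟨hmem, hx, hs'⟩, ha, hb, hs⟩
      subst hx; subst ha; subst hb; subst hs
      exact ⟨(hσ _ _ _).mp hmem, rfl, hs'⟩
  have hinj : Set.InjOn (fun e : V × V × ℕ => (σ e.1, σ e.2.1, e.2.2))
      (G.events.filter (fun e => e.1 = u ∧ e.2.2 ≤ t)) := by
    intro a _ b _ h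
    simp only [Prod.mk.injEq] at h
    obtain ⟨h1, h2, h3⟩ := h
    exact Prod.ext (σ.injective h1) (Prod.ext (σ.injective h2) h3)
  unfold nbrs
  rw [himg, Finset.image_val, Multiset.dedup_eq_self.mpr, Multiset.map_map,
    Multiset.map_map]
  · rfl
  · exact (Finset.filter _ G.events).nodup.map_on (fun a ha b hb h =>
      hinj (by simpa using ha) (by simpa using hb) h)

lemma wl_perm {V : Type} [DecidableEq V] (G : TemporalGraph V) (t : ℕ)
    (σ : Equiv.Perm V) (hσ : IsTempAutomorphism G σ) :
    ∀ (k : ℕ) (u : V), wlColor G t k (σ u) = wlColor G t k u := by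
  intro k
  induction k with
  | zero => intro u; rfl
  | succ k ih =>
    intro u
    show (_, _) = (_, _)
    rw [ih u, nbrs_perm G t σ hσ u, Multiset.map_map]
    congr 1
    exact Multiset.map_congr rfl (fun p _ => by simp [ih p.1])

lemma wl_const {V : Type} [DecidableEq V] (G : TemporalGraph V) (t : ℕ)
    (h : VertexTransitive G) (k : ℕ) (u v : V) :
    wlColor G t k u = wlColor G t k v := by
  obtain ⟨σ, hσ, huv⟩ := h u v
  rw [← huv, wl_perm G t σ hσ]

/-- For connected vertex-transitive temporal graphs with zero features, the Temporal 1-WL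
test assigns the same color to all nodes at every refinement iteration and every time;
consequently it cannot distinguish two such graphs on the same node set with the same
multiset of incident event timestamps per node. -/
theorem stmt4 {V : Type} [DecidableEq V] [Fintype V]
    (G₁ G₂ : TemporalGraph V) (t : ℕ)
    (h₁ : VertexTransitive G₁) (h₂ : VertexTransitive G₂)
    (htimes : ∀ u v : V,
      (nbrs G₁ t u).map Prod.snd = (nbrs G₂ t v).map Prod.snd) :
    (∀ (k : ℕ) (u v : V), wlColor G₁ t k u = wlColor G₁ t k v) ∧
    (∀ (k : ℕ) (u v : V), wlColor G₂ t k u = wlColor G₂ t k v) ∧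
    (∀ (k : ℕ) (u v : V), wlColor G₁ t k u = wlColor G₂ t k v) := by
  have key : ∀ (k : ℕ) (u v : V), wlColor G₁ t k u = wlColor G₂ t k v := by
    intro k
    induction k with
    | zero => intro u v; rfl
    | succ k ih =>
      intro u v
      show (_, _) = (_, _)
      have e1 : (nbrs G₁ t u).map (fun p => (wlColor G₁ t k p.1, t)) = 0 ∨ True := Or.inr trivial
      refine Prod.ext (ih u v) ?_
      have h1 : (nbrs G₁ t u).map (fun p => (wlColor G₁ t k p.1, p.2))
          = ((nbrs G₁ t u).map Prod.snd).map (fun s => (wlColor G₁ t k u, s)) := by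
        rw [Multiset.map_map]
        exact Multiset.map_congr rfl (fun p _ => by simp [wl_const G₁ t h₁ k p.1 u])
      have h2 : (nbrs G₂ t v).map (fun p => (wlColor G₂ t k p.1, p.2))
          = ((nbrs G₂ t v).map Prod.snd).map (fun s => (wlColor G₂ t k v, s)) := by
        rw [Multiset.map_map]
        exact Multiset.map_congr rfl (fun p _ => by simp [wl_const G₂ t h₂ k p.1 v])
      rw [h1, h2, htimes u v, ih u v]
  refine ⟨fun k u v => ?_, fun k u v => wl_const G₂ t h₂ k u v, key⟩
  exact wl_const G₁ t h₁ k u v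
end

section
/- The two Oscillating CSL temporal graphs—one evolving C_{N,s_1} → C_{N,s_2} → C_{N,s_1} → ... and the other C_{N,s_2} → C_{N,s_1} → C_{N,s_2} → ... over timestamps t_1,...,t_n with s_1 ≠ s_2 and the two static prototypes non-isomorphic—are non-isomorphic as temporal graphs, yet for every node u in the first graph and every node u' in the second, the multisets of (neighbor relation type, event time) pairs are equal, so Temporal 1-WL declares them indistinguishable. -/
/-- Neighbors of `u` in the circular skip link graph C_{N,s}: cycle neighbors `u ± 1`
and skip neighbors `u ± s`. -/
def cslNbrs {N : ℕ} (s : ℕ) (u : ZMod N) : Finset (ZMod N) :=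
  {u + 1, u - 1, u + (s : ZMod N), u - (s : ZMod N)}

/-- All edge events of one snapshot of C_{N,s} added simultaneously at timestamp `m`. -/
def cslEvents (N : ℕ) [NeZero N] (s m : ℕ) : Finset (ZMod N × ZMod N × ℕ) :=
  Finset.univ.biUnion (fun u : ZMod N => (cslNbrs s u).image (fun v => (u, v, m)))

/-- The Oscillating CSL temporal graph with timestamps `1, …, n`: at odd timestamps all
edges of C_{N,s₁} are added, at even timestamps all edges of C_{N,s₂}. -/
def oscGraph (N : ℕ) [NeZero N] (s₁ s₂ n : ℕ) : TemporalGraph (ZMod N) :=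
  ⟨(Finset.range n).biUnion
    (fun m => cslEvents N (if (m + 1) % 2 = 1 then s₁ else s₂) (m + 1))⟩

variable {N : ℕ} [NeZero N]

lemma mem_cslEvents {s m : ℕ} {e : ZMod N × ZMod N × ℕ} :
    e ∈ cslEvents N s m ↔ e.2.1 ∈ cslNbrs s e.1 ∧ e.2.2 = m := by
  obtain ⟨u, v, t⟩ := e
  simp [cslEvents]
  aesop

lemma mem_osc {a b n : ℕ} {u v : ZMod N} {m : ℕ} :
    (u, v, m) ∈ (oscGraph N a b n).events ↔
      1 ≤ m ∧ m ≤ n ∧ v ∈ cslNbrs (if m % 2 = 1 then a else b) u := by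
  simp only [oscGraph, Finset.mem_biUnion, Finset.mem_range, mem_cslEvents]
  constructor
  · rintro ⟨j, hj, hv, rfl⟩
    exact ⟨Nat.succ_le_succ (Nat.zero_le _), hj, hv⟩
  · rintro ⟨h1, h2, hv⟩
    exact ⟨m - 1, by omega, by rw [Nat.sub_add_cancel h1]; exact hv, by omega⟩

lemma count_times {a b n : ℕ} (u : ZMod N) (t₀ : ℕ) :
    Multiset.count t₀ ((nbrs (oscGraph N a b n) n u).map Prod.snd)
      = ((oscGraph N a b n).events.filter
          (fun e => (e.1 = u ∧ e.2.2 ≤ n) ∧ t₀ = e.2.2)).card := by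
  rw [nbrs, Multiset.map_map, Multiset.count_map]
  rw [show ((oscGraph N a b n).events.filter (fun e => e.1 = u ∧ e.2.2 ≤ n)).val.filter
        (fun e => t₀ = (Prod.snd ∘ fun e => (e.2.1, e.2.2)) e)
      = ((oscGraph N a b n).events.filter
          (fun e => (e.1 = u ∧ e.2.2 ≤ n) ∧ t₀ = e.2.2)).val from ?_]
  · rfl
  · simp only [Finset.filter_val, Multiset.filter_filter]
    apply Multiset.filter_congr
    intro e _
    constructor <;> (intro h; tauto)

lemma filter_eq {a b n : ℕ} (u : ZMod N) (t₀ : ℕ) :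
    (oscGraph N a b n).events.filter (fun e => (e.1 = u ∧ e.2.2 ≤ n) ∧ t₀ = e.2.2)
      = if 1 ≤ t₀ ∧ t₀ ≤ n then
          (cslNbrs (if t₀ % 2 = 1 then a else b) u).image (fun v => (u, v, t₀))
        else ∅ := by
  ext ⟨x, v, m⟩
  rw [Finset.mem_filter]
  simp only [mem_osc, Finset.notMem_empty]
  by_cases h : 1 ≤ t₀ ∧ t₀ ≤ n
  · rw [if_pos h]
    constructor
    · rintro ⟨⟨h1, h2, hv⟩, ⟨rfl, _⟩, rfl⟩
      exact Finset.mem_image_of_mem _ hv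
    · intro hmem
      obtain ⟨w, hw, heq⟩ := Finset.mem_image.mp hmem
      injection heq with e1 e2
      injection e2 with e2 e3
      subst e1; subst e2; subst e3
      exact ⟨⟨h.1, h.2, hw⟩, ⟨rfl, h.2⟩, rfl⟩
  · rw [if_neg h]
    simp only [Finset.notMem_empty, iff_false]
    rintro ⟨⟨h1, h2, _⟩, ⟨_, _⟩, rfl⟩
    exact h ⟨h1, h2⟩

lemma count_times' {a b n : ℕ} (u : ZMod N) (t₀ : ℕ) :
    Multiset.count t₀ ((nbrs (oscGraph N a b n) n u).map Prod.snd)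
      = if 1 ≤ t₀ ∧ t₀ ≤ n then (cslNbrs (if t₀ % 2 = 1 then a else b) u).card else 0 := by
  rw [count_times, filter_eq]
  by_cases h : 1 ≤ t₀ ∧ t₀ ≤ n
  · rw [if_pos h, if_pos h]
    exact Finset.card_image_of_injective _ (fun x y hxy => by
      injection hxy with _ h2; injection h2)
  · rw [if_neg h, if_neg h]
    exact Finset.card_empty

/-- The two Oscillating CSL temporal graphs (C_{N,s₁} → C_{N,s₂} → … versus
C_{N,s₂} → C_{N,s₁} → …) are non-isomorphic as temporal graphs, yet every node in the
first and every node in the second have the same multiset of event timestamps, and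
Temporal 1-WL assigns all nodes of both graphs the same color at every iteration,
hence declares them indistinguishable. -/
theorem stmt5 (N s₁ s₂ n : ℕ) [NeZero N] (hs : s₁ ≠ s₂) (hn : 2 ≤ n)
    (hcard : ∀ u v : ZMod N, (cslNbrs (N := N) s₁ u).card = (cslNbrs (N := N) s₂ v).card)
    (hstatic : ¬ ∃ π : Equiv.Perm (ZMod N), ∀ u v : ZMod N,
        v ∈ cslNbrs (N := N) s₁ u ↔ π v ∈ cslNbrs (N := N) s₂ (π u)) :
    (¬ ∃ π : Equiv.Perm (ZMod N), ∀ (u v : ZMod N) (m : ℕ),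
        (u, v, m) ∈ (oscGraph N s₁ s₂ n).events ↔
          (π u, π v, m) ∈ (oscGraph N s₂ s₁ n).events) ∧
    (∀ u u' : ZMod N,
        (nbrs (oscGraph N s₁ s₂ n) n u).map Prod.snd
          = (nbrs (oscGraph N s₂ s₁ n) n u').map Prod.snd) ∧
    (∀ (k : ℕ) (u u' : ZMod N),
        wlColor (oscGraph N s₁ s₂ n) n k u = wlColor (oscGraph N s₂ s₁ n) n k u') := by
  have hcc' : ∀ (c₁ c₂ : ℕ) (u v : ZMod N), c₁ = s₁ ∨ c₁ = s₂ → c₂ = s₁ ∨ c₂ = s₂ →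
      (cslNbrs (N := N) c₁ u).card = (cslNbrs (N := N) c₂ v).card := by
    rintro c₁ c₂ u v (rfl | rfl) (rfl | rfl)
    · rw [hcard u 0, ← hcard v 0]
    · exact hcard u v
    · exact (hcard v u).symm
    · rw [← hcard 0 u, hcard 0 v]
  have part2 : ∀ u u' : ZMod N,
      (nbrs (oscGraph N s₁ s₂ n) n u).map Prod.snd
        = (nbrs (oscGraph N s₂ s₁ n) n u').map Prod.snd := by
    intro u u'
    ext t₀
    rw [count_times', count_times']
    by_cases h : 1 ≤ t₀ ∧ t₀ ≤ n
    · rw [if_pos h, if_pos h]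
      by_cases h2 : t₀ % 2 = 1
      · rw [if_pos h2, if_pos h2]
        exact hcc' _ _ u u' (Or.inl rfl) (Or.inr rfl)
      · rw [if_neg h2, if_neg h2]
        exact hcc' _ _ u u' (Or.inr rfl) (Or.inl rfl)
    · rw [if_neg h, if_neg h]
  refine ⟨?_, part2, ?_⟩
  · rintro ⟨π, hπ⟩
    refine hstatic ⟨π, fun u v => ?_⟩
    have := hπ u v 1
    rw [mem_osc, mem_osc] at this
    simpa [(by omega : 1 ≤ n)] using this
  · intro k
    induction k with
    | zero => intro u u'; rfl
    | succ k ih =>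
      intro u u'
      have hconst : ∀ (G : TemporalGraph (ZMod N)) (w : ZMod N),
          (G = oscGraph N s₁ s₂ n ∨ G = oscGraph N s₂ s₁ n) →
          wlColor G n k w = wlColor (oscGraph N s₂ s₁ n) n k 0 := by
        rintro G w (rfl | rfl)
        · exact ih w 0
        · rw [← ih 0 w, ih 0 0]
      show (_, _) = (_, _)
      refine Prod.ext (ih u u') ?_
      have e1 : (nbrs (oscGraph N s₁ s₂ n) n u).map
            (fun p => (wlColor (oscGraph N s₁ s₂ n) n k p.1, p.2))
          = ((nbrs (oscGraph N s₁ s₂ n) n u).map Prod.snd).map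
            (fun t => (wlColor (oscGraph N s₂ s₁ n) n k 0, t)) := by
        rw [Multiset.map_map]
        exact Multiset.map_congr rfl (fun p _ => by
          simp only [Function.comp_apply]
          rw [hconst _ _ (Or.inl rfl)])
      have e2 : (nbrs (oscGraph N s₂ s₁ n) n u').map
            (fun p => (wlColor (oscGraph N s₂ s₁ n) n k p.1, p.2))
          = ((nbrs (oscGraph N s₂ s₁ n) n u').map Prod.snd).map
            (fun t => (wlColor (oscGraph N s₂ s₁ n) n k 0, t)) := by
        rw [Multiset.map_map]
        exact Multiset.map_congr rfl (fun p _ => by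
          simp only [Function.comp_apply]
          rw [hconst _ _ (Or.inr rfl)])
      rw [e1, e2, part2 u u']
end

section
/- There exists a pair of isomorphic temporal graphs for which a model augmented with permutation-sensitive positional features (counting length-1 walks per labeled node pair, as in PINT-pos) outputs non-isomorphic: specifically, at time t_1 the temporal graphs given by one snapshot of C_{7,2} and one snapshot of C_{7,3} (both with zero attributes) are isomorphic, but no row permutation π satisfies π · Pos(G_1) = Pos(G_2) where Pos(G) is the adjacency matrix; hence the injective model applied to these positional features distinguishes the graphs. -/
/-- Adjacency of the circular skip link graph C_{7,s} under the fixed clockwise node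
labeling by `ZMod 7`: `i` and `j` are adjacent iff they differ by `±1` or `±s`. -/
def cslAdj (s : ℕ) (i j : ZMod 7) : Prop :=
  j = i + 1 ∨ j = i - 1 ∨ j = i + (s : ZMod 7) ∨ j = i - (s : ZMod 7)

instance (s : ℕ) (i j : ZMod 7) : Decidable (cslAdj s i j) := by
  unfold cslAdj; infer_instance

/-- The isomorphism witness: multiplication by 3 on `ZMod 7`, sending
`±1 ↦ ±3` and `±2 ↦ ∓1`, so edges of C_{7,2} map to edges of C_{7,3}. -/
def mul3 : Equiv.Perm (ZMod 7) :=
  ⟨fun x => 3 * x, fun x => 5 * x, by decide, by decide⟩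

/-- The single-snapshot temporal graphs given by C_{7,2} and C_{7,3} (zero attributes)
are isomorphic, but no row permutation `π` satisfies `π · Pos(G₁) = Pos(G₂)` where
`Pos(G)` is the adjacency matrix; hence an injective model applied to these
permutation-sensitive positional features wrongly distinguishes the two graphs
(a false positive of PINT-pos). -/
theorem stmt8 :
    (∃ π : Equiv.Perm (ZMod 7), ∀ i j : ZMod 7, cslAdj 2 i j ↔ cslAdj 3 (π i) (π j)) ∧
    ¬ (∃ π : Equiv.Perm (ZMod 7), ∀ i j : ZMod 7, cslAdj 2 (π i) j ↔ cslAdj 3 i j) := by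
  constructor
  · exact ⟨mul3, by decide⟩
  · rintro ⟨π, h⟩
    have key : ∀ x : ZMod 7, ¬ ∀ j : ZMod 7, cslAdj 2 x j ↔ cslAdj 3 0 j := by decide
    exact key (π 0) (fun j => h 0 j)
end

section
/- In the Oscillating CSL temporal graphs G_1 (pattern C_{7,2} → C_{7,3} → ...) and G_2 (pattern C_{7,3} → C_{7,2} → ...) at a sufficiently large odd timestamp t_n, the heterogeneous revision value r^k_2(t_n, {1,7}) computed in G_1 differs from r^k_u(t_n, {1,7}) for every node u in G_2, provided the revision aggregator TR is injective; consequently a 3-layer RTRGN with heterogeneous revision distinguishes G_1 from G_2 while all Temporal-1WL-bounded models do not. -/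
/-- Events strictly before time `t` (the set `E(t^-)` used by the revision module). -/
def nbrsBefore {V : Type} [DecidableEq V] (G : TemporalGraph V) (t : ℕ) (u : V) :
    Multiset (V × ℕ) :=
  (G.events.filter (fun e => e.1 = u ∧ e.2.2 < t)).val.map (fun e => (e.2.1, e.2.2))

/-- Canonical value type of the heterogeneous revision computed by an injective
aggregator TR: a nested multiset of (lower revision, event time, specialty indicator). -/
def RCol : ℕ → Type
  | 0 => Unit
  | k + 1 => Multiset (RCol k × ℕ × Bool)

/-- Heterogeneous revision with injective TR: `hrev G t k u S` is the canonical value of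
`r^k_u(t, S)`, recursively collecting from each previous neighbor its lower-level
revision (with specialty set `S ∪ {u}`), the event time `Φ(e) = t'`, and the indicator
`1[v ∈ S]`. -/
def hrev {V : Type} [DecidableEq V] (G : TemporalGraph V) (t : ℕ) :
    (k : ℕ) → V → Finset V → RCol k
  | 0, _, _ => ()
  | k + 1, u, S =>
      (nbrsBefore G t u).map
        (fun p => (hrev G t k p.1 (insert u S), p.2, decide (p.1 ∈ S)))

lemma filter_osc (s1 s2 n : ℕ) (u : ZMod 7) (m0 : ℕ) (h1 : 1 ≤ m0) (h2 : m0 ≤ n)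
    (p : ZMod 7 → Prop) [DecidablePred p] :
    (oscGraph 7 s1 s2 n).events.filter (fun e => e.1 = u ∧ e.2.2 = m0 ∧ p e.2.1)
      = ((cslNbrs (if m0 % 2 = 1 then s1 else s2) u).filter p).image
          (fun v => (u, v, m0)) := by
  ext ⟨w, v, m⟩
  simp only [oscGraph, cslEvents, Finset.mem_filter, Finset.mem_biUnion, Finset.mem_range,
    Finset.mem_image, Finset.mem_univ, true_and, Prod.mk.injEq]
  constructor
  · rintro ⟨⟨m', hm', w', v', hv', rfl, rfl, rfl⟩, rfl, hm0, hp⟩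
    subst hm0
    exact ⟨v', ⟨hv', hp⟩, rfl, rfl, rfl⟩
  · rintro ⟨v', ⟨hv', hp⟩, rfl, rfl, rfl⟩
    refine ⟨⟨m0 - 1, by omega, u, v', ?_, rfl, rfl, by omega⟩, rfl, rfl, hp⟩
    have : m0 - 1 + 1 = m0 := by omega
    rw [this]; exact hv'

lemma count_proj_before (s1 s2 n : ℕ) (u : ZMod 7) (m0 : ℕ) (h1 : 1 ≤ m0) (h2 : m0 < n)
    (b : Bool) :
    Multiset.count (m0, b)
      ((nbrsBefore (oscGraph 7 s1 s2 n) n u).map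
        (fun p => (p.2, decide (p.1 ∈ ({1, 0} : Finset (ZMod 7))))))
    = ((cslNbrs (if m0 % 2 = 1 then s1 else s2) u).filter
        (fun v => decide (v ∈ ({1, 0} : Finset (ZMod 7))) = b)).card := by
  rw [nbrsBefore, Multiset.map_map, Multiset.count_map, ← Finset.filter_val,
    ← Finset.card_def, Finset.filter_filter]
  simp only [Function.comp]
  have hpred : ∀ e ∈ (oscGraph 7 s1 s2 n).events,
      ((e.1 = u ∧ e.2.2 < n) ∧
        (m0, b) = ((fun p : ZMod 7 × ℕ => (p.2, decide (p.1 ∈ ({1,0} : Finset (ZMod 7)))))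
          ((fun e : ZMod 7 × ZMod 7 × ℕ => (e.2.1, e.2.2)) e)))
      ↔ (e.1 = u ∧ e.2.2 = m0 ∧ (fun v => decide (v ∈ ({1,0} : Finset (ZMod 7))) = b) e.2.1) := by
    intro e _
    simp only [Prod.mk.injEq]
    constructor
    · rintro ⟨⟨ha, hb'⟩, hc, hd⟩; exact ⟨ha, hc.symm, hd.symm⟩
    · rintro ⟨ha, hc, hd⟩; exact ⟨⟨ha, by omega⟩, hc.symm, hd.symm⟩
  rw [Finset.filter_congr hpred, filter_osc s1 s2 n u m0 h1 (le_of_lt h2) (fun v => decide (v ∈ ({1,0} : Finset (ZMod 7))) = b)]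
  exact Finset.card_image_of_injective _ (fun a b' hab => by simpa using hab)

lemma count_snd_nbrs (s1 s2 n : ℕ) (u : ZMod 7) (m0 : ℕ) (h1 : 1 ≤ m0) (h2 : m0 ≤ n) :
    Multiset.count m0 ((nbrs (oscGraph 7 s1 s2 n) n u).map Prod.snd)
      = (cslNbrs (if m0 % 2 = 1 then s1 else s2) u).card := by
  rw [nbrs, Multiset.map_map, Multiset.count_map, ← Finset.filter_val,
    ← Finset.card_def, Finset.filter_filter]
  simp only [Function.comp]
  have hpred : ∀ e ∈ (oscGraph 7 s1 s2 n).events,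
      ((e.1 = u ∧ e.2.2 ≤ n) ∧
        m0 = (Prod.snd ((fun e : ZMod 7 × ZMod 7 × ℕ => (e.2.1, e.2.2)) e)))
      ↔ (e.1 = u ∧ e.2.2 = m0 ∧ (fun _ : ZMod 7 => True) e.2.1) := by
    intro e _
    constructor
    · rintro ⟨⟨ha, hb'⟩, hc⟩; exact ⟨ha, hc.symm, trivial⟩
    · rintro ⟨ha, hc, -⟩; exact ⟨⟨ha, by omega⟩, hc.symm⟩
  rw [Finset.filter_congr hpred, filter_osc s1 s2 n u m0 h1 h2 (fun _ => True),
    Finset.card_image_of_injective _ (fun a b' hab => by simpa using hab),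
    ]
  simp

lemma count_snd_nbrs_zero (s1 s2 n : ℕ) (u : ZMod 7) (m0 : ℕ) (h : ¬(1 ≤ m0 ∧ m0 ≤ n)) :
    Multiset.count m0 ((nbrs (oscGraph 7 s1 s2 n) n u).map Prod.snd) = 0 := by
  rw [Multiset.count_eq_zero]
  intro hmem
  rw [Multiset.mem_map] at hmem
  obtain ⟨⟨v, m⟩, hp, rfl⟩ := hmem
  rw [nbrs, Multiset.mem_map] at hp
  obtain ⟨e, he, hpe⟩ := hp
  rw [Finset.mem_val, Finset.mem_filter] at he
  obtain ⟨hev, -, hle⟩ := he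
  simp only [oscGraph, Finset.mem_biUnion, Finset.mem_range] at hev
  obtain ⟨m', hm', hcsl⟩ := hev
  simp only [cslEvents, Finset.mem_biUnion, Finset.mem_univ, Finset.mem_image,
    true_and] at hcsl
  obtain ⟨w', v', hv', rfl⟩ := hcsl
  obtain ⟨rfl, rfl⟩ : v' = v ∧ m' + 1 = m := by
    simpa [Prod.ext_iff] using hpe
  simp only at hle ⊢
  omega

lemma card_cslNbrs : ∀ u : ZMod 7, (cslNbrs 2 u).card = 4 ∧ (cslNbrs 3 u).card = 4 := by
  decide

lemma snd_nbrs_eq (s1 s2 s1' s2' n : ℕ)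
    (hs : (s1 = 2 ∧ s2 = 3) ∨ (s1 = 3 ∧ s2 = 2))
    (hs' : (s1' = 2 ∧ s2' = 3) ∨ (s1' = 3 ∧ s2' = 2)) (u u' : ZMod 7) :
    (nbrs (oscGraph 7 s1 s2 n) n u).map Prod.snd
      = (nbrs (oscGraph 7 s1' s2' n) n u').map Prod.snd := by
  ext m0
  by_cases hm : 1 ≤ m0 ∧ m0 ≤ n
  · rw [count_snd_nbrs s1 s2 n u m0 hm.1 hm.2, count_snd_nbrs s1' s2' n u' m0 hm.1 hm.2]
    have h4 : ∀ s : ℕ, s = 2 ∨ s = 3 → ∀ w : ZMod 7, (cslNbrs s w).card = 4 := by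
      rintro s (rfl | rfl) w
      exacts [(card_cslNbrs w).1, (card_cslNbrs w).2]
    rcases hs with ⟨rfl, rfl⟩ | ⟨rfl, rfl⟩ <;> rcases hs' with ⟨rfl, rfl⟩ | ⟨rfl, rfl⟩ <;>
      split_ifs <;>
      simp [h4 2 (Or.inl rfl), h4 3 (Or.inr rfl)]
  · rw [count_snd_nbrs_zero s1 s2 n u m0 hm, count_snd_nbrs_zero s1' s2' n u' m0 hm]

set_option maxHeartbeats 1000000 in
lemma wl_eq (s1 s2 s1' s2' n : ℕ)
    (hs : (s1 = 2 ∧ s2 = 3) ∨ (s1 = 3 ∧ s2 = 2))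
    (hs' : (s1' = 2 ∧ s2' = 3) ∨ (s1' = 3 ∧ s2' = 2)) :
    ∀ k (u u' : ZMod 7),
      wlColor (oscGraph 7 s1 s2 n) n k u = wlColor (oscGraph 7 s1' s2' n) n k u' := by
  intro k
  induction k with
  | zero => intro u u'; rfl
  | succ k ih =>
      intro u u'
      have hG : ∀ x y : ZMod 7,
          wlColor (oscGraph 7 s1 s2 n) n k x = wlColor (oscGraph 7 s1 s2 n) n k y := by
        intro x y; rw [ih x 0, ih y 0]
      have hG' : ∀ x y : ZMod 7,
          wlColor (oscGraph 7 s1' s2' n) n k x = wlColor (oscGraph 7 s1' s2' n) n k y := by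
        intro x y
        have h1 := ih 0 x
        have h2 := ih 0 y
        rw [← h1, ← h2]
      show (_, _) = (_, _)
      refine Prod.ext (ih u u') ?_
      calc (nbrs (oscGraph 7 s1 s2 n) n u).map
              (fun p => (wlColor (oscGraph 7 s1 s2 n) n k p.1, p.2))
          = (nbrs (oscGraph 7 s1 s2 n) n u).map
              (fun p => (wlColor (oscGraph 7 s1' s2' n) n k u', p.2)) := by
            exact Multiset.map_congr rfl (fun p _ => by rw [ih p.1 u'])
        _ = ((nbrs (oscGraph 7 s1 s2 n) n u).map Prod.snd).map
              (fun t => (wlColor (oscGraph 7 s1' s2' n) n k u', t)) := by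
            rw [Multiset.map_map]; rfl
        _ = ((nbrs (oscGraph 7 s1' s2' n) n u').map Prod.snd).map
              (fun t => (wlColor (oscGraph 7 s1' s2' n) n k u', t)) := by
            rw [snd_nbrs_eq s1 s2 s1' s2' n hs hs' u u']
        _ = (nbrs (oscGraph 7 s1' s2' n) n u').map
              (fun p => (wlColor (oscGraph 7 s1' s2' n) n k p.1, p.2)) := by
            rw [Multiset.map_map]
            exact Multiset.map_congr rfl
              (fun p _ => by simp only [Function.comp]; rw [hG' u' p.1])

set_option maxHeartbeats 1000000 in
/-- In the Oscillating CSL graphs `G₁ = (C_{7,2} → C_{7,3} → …)` and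
`G₂ = (C_{7,3} → C_{7,2} → …)` at an odd timestamp `n ≥ 3`, the heterogeneous revision
`r^k_2(t_n, {1,7})` in `G₁` (nodes 1..7 are represented by `ZMod 7`, node 7 by `0`)
differs from `r^k_u(t_n, {1,7})` for every node `u` of `G₂` and every `k ≥ 1` (so a
3-layer RTRGN with injective functions distinguishes the two graphs), while Temporal
1-WL assigns identical colors throughout, hence cannot distinguish them. -/
theorem stmt12 (n : ℕ) (hn : 3 ≤ n) (hodd : n % 2 = 1) :
    (∀ k : ℕ, 1 ≤ k → ∀ u : ZMod 7,
      hrev (oscGraph 7 2 3 n) n k 2 {1, 0} ≠ hrev (oscGraph 7 3 2 n) n k u {1, 0}) ∧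
    (∀ (k : ℕ) (u u' : ZMod 7),
      wlColor (oscGraph 7 2 3 n) n k u = wlColor (oscGraph 7 3 2 n) n k u') := by
  constructor
  · intro k hk u heq
    obtain ⟨j, rfl⟩ : ∃ j, k = j + 1 := ⟨k - 1, by omega⟩
    have key : (nbrsBefore (oscGraph 7 2 3 n) n 2).map
          (fun p => (p.2, decide (p.1 ∈ ({1, 0} : Finset (ZMod 7)))))
        = (nbrsBefore (oscGraph 7 3 2 n) n u).map
          (fun p => (p.2, decide (p.1 ∈ ({1, 0} : Finset (ZMod 7))))) := by
      have h := congrArg (Multiset.map (Prod.snd : RCol j × ℕ × Bool → ℕ × Bool)) heq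
      simpa only [hrev, Multiset.map_map, Function.comp] using h
    have c1 := congrArg (Multiset.count ((1 : ℕ), true)) key
    have c2 := congrArg (Multiset.count ((2 : ℕ), true)) key
    rw [count_proj_before 2 3 n 2 1 le_rfl (by omega) true,
      count_proj_before 3 2 n u 1 le_rfl (by omega) true] at c1
    rw [count_proj_before 2 3 n 2 2 (by omega) (by omega) true,
      count_proj_before 3 2 n u 2 (by omega) (by omega) true] at c2
    norm_num at c1 c2
    clear heq key hk hn hodd
    revert c1 c2
    revert u
    decide
  · exact fun k u u' => wl_eq 2 3 3 2 n (Or.inl ⟨rfl, rfl⟩) (Or.inr ⟨rfl, rfl⟩) k u u'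
end
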